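/- Let α be a positive transcendental real number and β a positive real number with β ≠ 1, β ≠ α, β ≠ 1/α. Let G be the additive subgroup of ℝ² generated by the set { q·(α^{2i}, β^{2i}) : q ∈ ℚ, i ∈ ℤ } ∪ { (α^{2i+1}, β^{2i+1}) : i ∈ ℤ }. Then G is dense in ℝ². -/

import Mathlib

theorem stmt11 (α β : ℝ) (hα : 0 < α) (htr : Transcendental ℚ α) (hβ : 0 < β)
    (hβ1 : β ≠ 1) (hβα : β ≠ α) (hβα' : β ≠ α⁻¹) :
    Dense ((AddSubgroup.closure
        ({v | ∃ q : ℚ, ∃ i : ℤ, v = (q : ℝ) • ![α ^ (2 * i), β ^ (2 * i)]} ∪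
         {v | ∃ i : ℤ, v = ![α ^ (2 * i + 1), β ^ (2 * i + 1)]}) :
        AddSubgroup (EuclideanSpace ℝ (Fin 2))) : Set (EuclideanSpace ℝ (Fin 2))) := by
  set S : Set (EuclideanSpace ℝ (Fin 2)) :=
      ({v | ∃ q : ℚ, ∃ i : ℤ, v = (q : ℝ) • ![α ^ (2 * i), β ^ (2 * i)]} ∪
       {v | ∃ i : ℤ, v = ![α ^ (2 * i + 1), β ^ (2 * i + 1)]}) with hS
  set v₀ : EuclideanSpace ℝ (Fin 2) := WithLp.toLp 2 ![α ^ (2 * (0:ℤ)), β ^ (2 * (0:ℤ))] with hv₀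
  set v₁ : EuclideanSpace ℝ (Fin 2) := WithLp.toLp 2 ![α ^ (2 * (1:ℤ)), β ^ (2 * (1:ℤ))] with hv₁
  have hA : α ^ (2 * (0:ℤ)) = 1 := by norm_num
  have hB : β ^ (2 * (0:ℤ)) = 1 := by norm_num
  have hA1 : α ^ (2 * (1:ℤ)) = α ^ (2:ℕ) := by
    rw [show (2 * (1:ℤ)) = ((2:ℕ) : ℤ) by norm_num, zpow_natCast]
  have hB1 : β ^ (2 * (1:ℤ)) = β ^ (2:ℕ) := by
    rw [show (2 * (1:ℤ)) = ((2:ℕ) : ℤ) by norm_num, zpow_natCast]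
  have hA2 : α ^ (2:ℤ) = α ^ (2:ℕ) := by
    rw [show ((2:ℤ) = ((2:ℕ) : ℤ)) by norm_num, zpow_natCast]
  have hB2 : β ^ (2:ℤ) = β ^ (2:ℕ) := by
    rw [show ((2:ℤ) = ((2:ℕ) : ℤ)) by norm_num, zpow_natCast]
  have hab : α ^ 2 ≠ β ^ 2 := by
    intro h
    rcases lt_or_gt_of_ne hβα with h1 | h1 <;> nlinarith
  let f : (ℝ × ℝ) →ₗ[ℝ] EuclideanSpace ℝ (Fin 2) :=
    { toFun := fun p => p.1 • v₀ + p.2 • v₁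
      map_add' := by intro p q; simp only [Prod.fst_add, Prod.snd_add, add_smul]; module
      map_smul' := by intro c p; simp only [Prod.smul_fst, Prod.smul_snd, smul_eq_mul,
        RingHom.id_apply]; module }
  have hf0 : ∀ p : ℝ × ℝ, f p 0 = p.1 * α ^ (2 * (0:ℤ)) + p.2 * α ^ (2 * (1:ℤ)) := by
    intro p; rfl
  have hf1 : ∀ p : ℝ × ℝ, f p 1 = p.1 * β ^ (2 * (0:ℤ)) + p.2 * β ^ (2 * (1:ℤ)) := by
    intro p; rfl
  have hbij : Function.Bijective f := by
    constructor
    · intro p q hpq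
      have h0 := congrFun (congrArg (fun w : EuclideanSpace ℝ (Fin 2) => (w : Fin 2 → ℝ)) hpq) 0
      have h1 := congrFun (congrArg (fun w : EuclideanSpace ℝ (Fin 2) => (w : Fin 2 → ℝ)) hpq) 1
      simp only [hf0, hf1, hA, hB, hA1, hB1, hA2, hB2, mul_one] at h0 h1
      have hy : p.2 = q.2 := by
        have h2 : p.2 * (α ^ 2 - β ^ 2) = q.2 * (α ^ 2 - β ^ 2) := by
          linear_combination h0 - h1
        exact mul_right_cancel₀ (sub_ne_zero.mpr hab) h2
      have hx : p.1 = q.1 := by linear_combination h0 - α ^ 2 * hy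
      exact Prod.ext hx hy
    · intro w
      have hne : β ^ 2 - α ^ 2 ≠ 0 := sub_ne_zero.mpr (Ne.symm hab)
      set a : ℝ := w 0 with ha
      set b : ℝ := w 1 with hb
      set y : ℝ := (b - a) / (β ^ 2 - α ^ 2) with hy
      have hyc : y * (β ^ 2 - α ^ 2) = b - a := div_mul_cancel₀ _ hne
      refine ⟨(a - y * α ^ 2, y), ?_⟩
      ext i
      fin_cases i
      · show f _ 0 = a
        rw [hf0]; simp only [hA, hA1, hA2, mul_one]; ring
      · show f _ 1 = b
        rw [hf1]; simp only [hB, hB1, hB2, mul_one]; linear_combination hyc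
  let e : (ℝ × ℝ) ≃L[ℝ] EuclideanSpace ℝ (Fin 2) :=
    (LinearEquiv.ofBijective f hbij).toContinuousLinearEquiv
  have hdense : Dense ((Set.range ((↑) : ℚ → ℝ)) ×ˢ (Set.range ((↑) : ℚ → ℝ))) :=
    Dense.prod Rat.denseRange_cast Rat.denseRange_cast
  have himg : Dense (e '' ((Set.range ((↑) : ℚ → ℝ)) ×ˢ (Set.range ((↑) : ℚ → ℝ)))) :=
    DenseRange.dense_image (e.surjective.denseRange) e.continuous hdense
  refine Dense.mono ?_ himg
  rintro w ⟨⟨x, y⟩, ⟨⟨q, rfl⟩, ⟨r, rfl⟩⟩, rfl⟩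
  have h0 : (q : ℝ) • v₀ ∈ S := Or.inl ⟨q, 0, rfl⟩
  have h1 : (r : ℝ) • v₁ ∈ S := Or.inl ⟨r, 1, rfl⟩
  exact AddSubgroup.add_mem _ (AddSubgroup.subset_closure h0) (AddSubgroup.subset_closure h1)
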